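/- Fix a finite transition-closed set of states F. Suppose →(α) ⊆ Distr(F) × Distr(F) is a relation closed under convex decomposition of the source (if μ →(α) ν and μ = (1−r)μ₁ ⊕ rμ₂ then ν = (1−r)ν₁ ⊕ rν₂ with μ₁ →(α) ν₁, μ₂ →(α) ν₂) and closed under limits in the target (if μ →(α) νᵢ for all i and νᵢ → ν then μ →(α) ν). Then →(α) is jointly closed under limits: if (μᵢ), (νᵢ) are sequences in Distr(F) with μᵢ → μ, νᵢ → ν, and μᵢ →(α) νᵢ for all i ∈ ℕ, then μ →(α) ν. -/

import Mathlib

/-- A finitely supported probability distribution. -/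
def IsDistr {X : Type*} (μ : X → ℝ) : Prop :=
  (∀ x, 0 ≤ μ x) ∧ (Function.support μ).Finite ∧ ∑ᶠ x, μ x = 1

lemma isDistr_sum {X : Type*} [Fintype X] {μ : X → ℝ} (h : IsDistr μ) :
    ∑ x, μ x = 1 := by
  rw [← finsum_eq_sum_of_fintype]; exact h.2.2

lemma isDistr_le_one {X : Type*} [Fintype X] {μ : X → ℝ} (h : IsDistr μ) (x : X) :
    μ x ≤ 1 := by
  have := Finset.single_le_sum (fun y _ => h.1 y) (Finset.mem_univ x)
  rw [isDistr_sum h] at this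
  exact this

/-- over a finite set of states `F`, suppose the relation `R`
(i.e. `→(α)`) on distributions is closed under binary convex decomposition of the
source and closed under limits in the target. Then `R` is jointly closed under
limits: `μᵢ → μ`, `νᵢ → ν` and `μᵢ R νᵢ` for all `i` imply `μ R ν`. -/
theorem partial_transitions_jointly_closed {F : Type*} [Fintype F]
    (R : (F → ℝ) → (F → ℝ) → Prop)
    (hdec : ∀ (μ ν μ₁ μ₂ : F → ℝ) (r : ℝ), 0 ≤ r → r ≤ 1 →
      IsDistr μ₁ → IsDistr μ₂ → R μ ν →
      (∀ x, μ x = (1 - r) * μ₁ x + r * μ₂ x) →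
      ∃ ν₁ ν₂ : F → ℝ, IsDistr ν₁ ∧ IsDistr ν₂ ∧ R μ₁ ν₁ ∧ R μ₂ ν₂ ∧
        ∀ x, ν x = (1 - r) * ν₁ x + r * ν₂ x)
    (htarget : ∀ (μ : F → ℝ) (νs : ℕ → F → ℝ) (ν : F → ℝ),
      (∀ i, R μ (νs i)) → Filter.Tendsto νs Filter.atTop (nhds ν) → R μ ν)
    (μs νs : ℕ → F → ℝ) (μ ν : F → ℝ)
    (hd : ∀ i, IsDistr (μs i) ∧ IsDistr (νs i)) (hμ : IsDistr μ) (hν : IsDistr ν)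
    (hμlim : Filter.Tendsto μs Filter.atTop (nhds μ))
    (hνlim : Filter.Tendsto νs Filter.atTop (nhds ν))
    (hR : ∀ i, R (μs i) (νs i)) :
    R μ ν := by
  classical
  have hμx : ∀ x, Filter.Tendsto (fun i => μs i x) Filter.atTop (nhds (μ x)) :=
    fun x => tendsto_pi_nhds.mp hμlim x
  have hνx : ∀ x, Filter.Tendsto (fun i => νs i x) Filter.atTop (nhds (ν x)) :=
    fun x => tendsto_pi_nhds.mp hνlim x
  set S : ℕ → ℝ := fun i => ∑ x, max 0 (μ x - μs i x) / μ x with hSdef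
  set r : ℕ → ℝ := fun i => min 1 (S i) with hrdef
  have hterm_nonneg : ∀ i x, 0 ≤ max 0 (μ x - μs i x) / μ x :=
    fun i x => div_nonneg (le_max_left _ _) (hμ.1 x)
  have hS0 : ∀ i, 0 ≤ S i := fun i => Finset.sum_nonneg (fun x _ => hterm_nonneg i x)
  have hr0 : ∀ i, 0 ≤ r i := fun i => le_min zero_le_one (hS0 i)
  have hr1 : ∀ i, r i ≤ 1 := fun i => min_le_left _ _
  -- key inequality : (1 - r i) * μ x ≤ μs i x
  have hkey : ∀ i x, (1 - r i) * μ x ≤ μs i x := by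
    intro i x
    rcases le_or_gt (μ x - μs i x) 0 with h | h
    · nlinarith [hr0 i, hr1 i, hμ.1 x]
    · have hμxpos : 0 < μ x := by
        by_contra hc
        have : μ x = 0 := le_antisymm (not_lt.mp hc) (hμ.1 x)
        have := (hd i).1.1 x
        nlinarith
      have ht : (μ x - μs i x) / μ x ≤ r i := by
        have h1 : (μ x - μs i x) / μ x ≤ 1 := by
          rw [div_le_one hμxpos]
          have := (hd i).1.1 x
          linarith
        have h2 : (μ x - μs i x) / μ x ≤ S i := by
          have : max 0 (μ x - μs i x) / μ x ≤ S i :=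
            Finset.single_le_sum (fun y _ => hterm_nonneg i y) (Finset.mem_univ x)
          rwa [max_eq_right h.le] at this
        exact le_min h1 h2
      have := (div_le_iff₀ hμxpos).mp ht
      nlinarith
  -- r tends to 0
  have hSlim : Filter.Tendsto S Filter.atTop (nhds 0) := by
    have : Filter.Tendsto S Filter.atTop (nhds (∑ x : F, max 0 (μ x - μ x) / μ x)) := by
      apply tendsto_finset_sum
      intro x _
      exact (Filter.Tendsto.max tendsto_const_nhds
        (tendsto_const_nhds.sub (hμx x))).div_const _
    simpa using this
  have hrlim : Filter.Tendsto r Filter.atTop (nhds 0) := by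
    have := Filter.Tendsto.min (tendsto_const_nhds : Filter.Tendsto (fun _ : ℕ => (1:ℝ))
      Filter.atTop (nhds 1)) hSlim
    simpa using this
  -- decomposition of μs i
  have hdecomp : ∀ i, ∃ μ₂ : F → ℝ, IsDistr μ₂ ∧
      ∀ x, μs i x = (1 - r i) * μ x + r i * μ₂ x := by
    intro i
    rcases eq_or_lt_of_le (hr0 i) with hri | hri
    · -- r i = 0, so μs i = μ
      refine ⟨μ, hμ, fun x => ?_⟩
      have hle : ∀ y, μ y ≤ μs i y := by
        intro y
        have := hkey i y
        rw [← hri] at this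
        simpa using this
      have hsum : ∑ y, (μs i y - μ y) = 0 := by
        rw [Finset.sum_sub_distrib, isDistr_sum (hd i).1, isDistr_sum hμ, sub_self]
      have := (Finset.sum_eq_zero_iff_of_nonneg
        (fun y _ => by have := hle y; linarith)).mp hsum x (Finset.mem_univ x)
      rw [← hri]
      linarith
    · refine ⟨fun x => (μs i x - (1 - r i) * μ x) / r i, ⟨?_, Set.toFinite _, ?_⟩, ?_⟩
      · intro x
        exact div_nonneg (by linarith [hkey i x]) (hr0 i)
      · rw [finsum_eq_sum_of_fintype, ← Finset.sum_div, Finset.sum_sub_distrib,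
          ← Finset.mul_sum, isDistr_sum (hd i).1, isDistr_sum hμ]
        field_simp
        ring
      · intro x
        field_simp
        ring
  choose μ₂ hμ₂d hμ₂e using hdecomp
  have h := fun i => hdec (μs i) (νs i) μ (μ₂ i) (r i) (hr0 i) (hr1 i) hμ (hμ₂d i)
    (hR i) (hμ₂e i)
  choose ν₁ ν₂ hν₁d hν₂d hRν₁ hRν₂ hνe using h
  -- ν₁ tends to ν
  have hlim : Filter.Tendsto ν₁ Filter.atTop (nhds ν) := by
    rw [tendsto_pi_nhds]
    intro x
    rw [tendsto_iff_dist_tendsto_zero]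
    simp only [Real.dist_eq]
    apply squeeze_zero (fun i => abs_nonneg _)
      (g := fun i => 2 * r i + |νs i x - ν x|)
    · intro i
      have he := hνe i x
      have hb1 : |ν₁ i x - ν₂ i x| ≤ 2 := by
        have h1 := (hν₁d i).1 x
        have h2 := isDistr_le_one (hν₁d i) x
        have h3 := (hν₂d i).1 x
        have h4 := isDistr_le_one (hν₂d i) x
        rw [abs_le]; constructor <;> linarith
      have heq : ν₁ i x - ν x = (νs i x - ν x) + r i * (ν₁ i x - ν₂ i x) := by
        rw [he]; ring
      calc |ν₁ i x - ν x| ≤ |νs i x - ν x| + |r i * (ν₁ i x - ν₂ i x)| := by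
            rw [heq]; exact abs_add_le _ _
        _ ≤ |νs i x - ν x| + r i * 2 := by
            rw [abs_mul, abs_of_nonneg (hr0 i)]
            have := mul_le_mul_of_nonneg_left hb1 (hr0 i)
            linarith
        _ = 2 * r i + |νs i x - ν x| := by ring
    · have h1 : Filter.Tendsto (fun i => 2 * r i) Filter.atTop (nhds (2 * 0)) :=
        hrlim.const_mul 2
      have h2 : Filter.Tendsto (fun i => |νs i x - ν x|) Filter.atTop (nhds |ν x - ν x|) :=
        ((hνx x).sub_const (ν x)).abs
      have := h1.add h2
      simpa using this
  exact htarget μ ν₁ ν hRν₁ hlim
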